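/- For every vertex v of the path graph G(P) of a convex point set P, the distance in G(P) from v to the set B of boundary paths equals the number of diagonals in the path represented by v. -/

import Mathlib

namespace PG

/-- The `k`-th vertex (mod `n`) of the convex polygon. -/
def pt (n : ℕ) (hn : 0 < n) (k : ℕ) : Fin n := ⟨k % n, Nat.mod_lt _ hn⟩

/-- `e` is a boundary (convex hull) edge of the convex `n`-gon. -/
def IsHullEdge {n : ℕ} (e : Sym2 (Fin n)) : Prop :=
  ∃ a b : Fin n, e = s(a, b) ∧ ((a.val + 1) % n = b.val ∨ (b.val + 1) % n = a.val)

instance {n : ℕ} : DecidablePred (IsHullEdge (n := n)) := fun _ => by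
  unfold IsHullEdge; infer_instance

/-- Two chords of the convex `n`-gon cross (intersect in interior points):
their endpoint pairs are all distinct and separate each other in the cyclic order. -/
def Crosses {n : ℕ} (e f : Sym2 (Fin n)) : Prop :=
  ∃ a b c d : Fin n, e = s(a, b) ∧ f = s(c, d) ∧
    a ≠ b ∧ c ≠ d ∧ a ≠ c ∧ a ≠ d ∧ b ≠ c ∧ b ≠ d ∧
    (((c.val + n - a.val) % n < (b.val + n - a.val) % n) ↔
      ¬((d.val + n - a.val) % n < (b.val + n - a.val) % n))

instance {n : ℕ} (e f : Sym2 (Fin n)) : Decidable (Crosses e f) := by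
  unfold Crosses; infer_instance

/-- The edge set of the spanning path visiting the points in the order given
by the permutation `p`. -/
def pathEdges {n : ℕ} (p : Equiv.Perm (Fin n)) : Finset (Sym2 (Fin n)) :=
  Finset.univ.filter (fun e => ∃ i j : Fin n, e = s(p i, p j) ∧ j.val = i.val + 1)

/-- `E` is the edge set of a non-crossing (plane) spanning path. -/
def IsNCPath {n : ℕ} (E : Finset (Sym2 (Fin n))) : Prop :=
  (∃ p : Equiv.Perm (Fin n), E = pathEdges p) ∧ ∀ e ∈ E, ∀ f ∈ E, ¬ Crosses e f

instance {n : ℕ} : DecidablePred (IsNCPath (n := n)) := fun _ => by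
  unfold IsNCPath pathEdges; infer_instance

/-- Vertices of the path graph `G(P)`: non-crossing spanning paths. -/
def PVert (n : ℕ) := {E : Finset (Sym2 (Fin n)) // IsNCPath E}

instance {n : ℕ} : Fintype (PVert n) := Subtype.fintype _
instance {n : ℕ} : DecidableEq (PVert n) := Subtype.instDecidableEq

/-- The path graph `G(P)`: two plane spanning paths are adjacent iff their
edge sets differ in exactly two edges. -/
def pathGraph (n : ℕ) : SimpleGraph (PVert n) where
  Adj u v := u ≠ v ∧ (u.1 \ v.1 ∪ v.1 \ u.1).card = 2
  symm := by constructor; rintro u v ⟨h1, h2⟩; exact ⟨h1.symm, by rwa [Finset.union_comm]⟩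
  loopless := by constructor; rintro u ⟨h, _⟩; exact h rfl

instance {n : ℕ} : DecidableRel (pathGraph n).Adj := fun u v => by
  unfold pathGraph; infer_instance

/-- `v` is a boundary path: all its edges are hull edges. -/
def IsBoundary {n : ℕ} (v : PVert n) : Prop := ∀ e ∈ v.1, IsHullEdge e

/-- Number of diagonals (the level) of a path. -/
def diagCount {n : ℕ} (v : PVert n) : ℕ :=
  (v.1.filter (fun e => ¬ IsHullEdge e)).card

/-- Degree of a point in an edge set. -/
def degIn {n : ℕ} (E : Finset (Sym2 (Fin n))) (x : Fin n) : ℕ :=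
  (E.filter (fun e => x ∈ e)).card



lemma pos_spec {n : ℕ} (a x : Fin n) :
    (x.val + n - a.val) % n = if a.val ≤ x.val then x.val - a.val else x.val + n - a.val := by
  have hx := x.isLt; have ha := a.isLt
  rcases le_or_gt a.val x.val with h | h
  · rw [if_pos h]
    have : x.val + n - a.val = (x.val - a.val) + n := by omega
    rw [this, Nat.add_mod_right, Nat.mod_eq_of_lt (by omega)]
  · rw [if_neg (by omega), Nat.mod_eq_of_lt (by omega)]

lemma succ_spec {n : ℕ} (x : ℕ) (h : x < n) :
    (x + 1) % n = if x + 1 = n then 0 else x + 1 := by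
  by_cases h1 : x + 1 = n
  · rw [if_pos h1, h1, Nat.mod_self]
  · rw [if_neg h1, Nat.mod_eq_of_lt (by omega)]

lemma add_spec {n : ℕ} (a v : ℕ) (ha : a < n) (hv : v < n) :
    (a + v) % n = if a + v < n then a + v else a + v - n := by
  rcases lt_or_ge (a+v) n with h | h
  · rw [if_pos h, Nat.mod_eq_of_lt h]
  · rw [if_neg (by omega), Nat.mod_eq_sub_mod h, Nat.mod_eq_of_lt (by omega)]

/-- position of `x` measured from `a` -/
def posn {n : ℕ} (a x : Fin n) : ℕ := (x.val + n - a.val) % n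

lemma posn_lt {n : ℕ} (hn : 0 < n) (a x : Fin n) : posn a x < n := Nat.mod_lt _ hn

lemma posn_self {n : ℕ} (a : Fin n) : posn a a = 0 := by
  unfold posn; rw [pos_spec]; simp

lemma posn_inj {n : ℕ} {a x y : Fin n} (h : posn a x = posn a y) : x = y := by
  unfold posn at h; rw [pos_spec, pos_spec] at h
  have hx := x.isLt; have hy := y.isLt; have ha := a.isLt
  apply Fin.ext; split_ifs at h <;> omega

lemma posn_succ {n : ℕ} (a x y : Fin n) :
    ((x.val + 1) % n = y.val) ↔ ((posn a x + 1) % n = posn a y) := by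
  have hx := x.isLt; have hy := y.isLt; have ha := a.isLt; have hn : 0 < n := by omega
  unfold posn
  rw [succ_spec x.val hx, succ_spec _ (Nat.mod_lt _ hn), pos_spec, pos_spec]
  split_ifs <;> omega

lemma posn_surj {n : ℕ} (hn : 0 < n) (a : Fin n) (v : ℕ) (hv : v < n) :
    ∃ x : Fin n, posn a x = v := by
  have ha := a.isLt
  refine ⟨⟨(a.val + v) % n, Nat.mod_lt _ hn⟩, ?_⟩
  show ((a.val + v) % n + n - a.val) % n = v
  have h1 := add_spec a.val v ha hv
  have h2 : ((a.val + v) % n + n - a.val) % n =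
      if a.val ≤ (a.val + v) % n then (a.val + v) % n - a.val
      else (a.val + v) % n + n - a.val := pos_spec a ⟨(a.val + v) % n, Nat.mod_lt _ hn⟩
  rw [h2, h1]
  split_ifs at * <;> omega

lemma hull_iff {n : ℕ} (x y : Fin n) :
    IsHullEdge s(x, y) ↔ ((x.val + 1) % n = y.val ∨ (y.val + 1) % n = x.val) := by
  constructor
  · rintro ⟨a, b, he, hd⟩
    rw [Sym2.eq_iff] at he
    rcases he with ⟨rfl, rfl⟩ | ⟨rfl, rfl⟩
    · exact hd
    · exact hd.symm
  · intro h; exact ⟨x, y, rfl, h⟩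

/-- a hull edge crosses nothing (first position) -/
lemma not_crosses_of_hull_left {n : ℕ} (hn : 2 ≤ n) {e f : Sym2 (Fin n)}
    (he : IsHullEdge e) : ¬ Crosses e f := by
  rintro ⟨a, b, c, d, rfl, rfl, hab, hcd, hac, had, hbc, hbd, hiff⟩
  rw [hull_iff] at he
  have ha := a.isLt; have hb := b.isLt; have hc := c.isLt; have hd2 := d.isLt
  have hab' : a.val ≠ b.val := fun h => hab (Fin.ext h)
  have hac' : a.val ≠ c.val := fun h => hac (Fin.ext h)
  have had' : a.val ≠ d.val := fun h => had (Fin.ext h)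
  have hbc' : b.val ≠ c.val := fun h => hbc (Fin.ext h)
  have hbd' : b.val ≠ d.val := fun h => hbd (Fin.ext h)
  rw [pos_spec, pos_spec, pos_spec] at hiff
  rcases he with h1 | h1
  · rw [succ_spec a.val ha] at h1
    rcases hiff with ⟨h2, h3⟩
    split_ifs at h1 h2 h3 <;> omega
  · rw [succ_spec b.val hb] at h1
    rcases hiff with ⟨h2, h3⟩
    split_ifs at h1 h2 h3 <;> omega

/-- a hull edge crosses nothing (second position) -/
lemma not_crosses_of_hull_right {n : ℕ} (hn : 2 ≤ n) {e f : Sym2 (Fin n)}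
    (hf : IsHullEdge f) : ¬ Crosses e f := by
  rintro ⟨a, b, c, d, rfl, rfl, hab, hcd, hac, had, hbc, hbd, hiff⟩
  rw [hull_iff] at hf
  have ha := a.isLt; have hb := b.isLt; have hc := c.isLt; have hd2 := d.isLt
  have hab' : a.val ≠ b.val := fun h => hab (Fin.ext h)
  have hcd' : c.val ≠ d.val := fun h => hcd (Fin.ext h)
  have hac' : a.val ≠ c.val := fun h => hac (Fin.ext h)
  have had' : a.val ≠ d.val := fun h => had (Fin.ext h)
  have hbc' : b.val ≠ c.val := fun h => hbc (Fin.ext h)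
  have hbd' : b.val ≠ d.val := fun h => hbd (Fin.ext h)
  rw [pos_spec, pos_spec, pos_spec] at hiff
  rcases hf with h1 | h1
  · rw [succ_spec c.val hc] at h1
    rcases hiff with ⟨h2, h3⟩
    split_ifs at h1 h2 h3 <;> omega
  · rw [succ_spec d.val hd2] at h1
    rcases hiff with ⟨h2, h3⟩
    split_ifs at h1 h2 h3 <;> omega

section Part2
variable {n : ℕ}

/-- mod-`n` indexing of the path's vertices -/
def PP (hn0 : 0 < n) (p : Equiv.Perm (Fin n)) (t : ℕ) : Fin n := p (pt n hn0 t)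

lemma PP_inj (hn0 : 0 < n) (p : Equiv.Perm (Fin n)) {t t' : ℕ} (ht : t < n) (ht' : t' < n)
    (h : PP hn0 p t = PP hn0 p t') : t = t' := by
  unfold PP pt at h
  have h2 : t % n = t' % n := congrArg Fin.val (p.injective h)
  rwa [Nat.mod_eq_of_lt ht, Nat.mod_eq_of_lt ht'] at h2

lemma PP_surj (hn0 : 0 < n) (p : Equiv.Perm (Fin n)) (x : Fin n) :
    ∃ m, m < n ∧ PP hn0 p m = x := by
  refine ⟨(p.symm x).val, (p.symm x).isLt, ?_⟩
  unfold PP pt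
  have : (⟨(p.symm x).val % n, Nat.mod_lt _ hn0⟩ : Fin n) = p.symm x :=
    Fin.ext (Nat.mod_eq_of_lt (p.symm x).isLt)
  rw [this, Equiv.apply_symm_apply]

lemma mem_pathEdges (hn0 : 0 < n) (p : Equiv.Perm (Fin n)) (e : Sym2 (Fin n)) :
    e ∈ pathEdges p ↔ ∃ t, t + 1 < n ∧ e = s(PP hn0 p t, PP hn0 p (t+1)) := by
  unfold pathEdges
  rw [Finset.mem_filter]
  simp only [Finset.mem_univ, true_and]
  constructor
  · rintro ⟨i, j, he, hij⟩
    refine ⟨i.val, by have := j.isLt; omega, ?_⟩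
    have hi : pt n hn0 i.val = i := Fin.ext (Nat.mod_eq_of_lt i.isLt)
    have hj : pt n hn0 (i.val + 1) = j := by
      apply Fin.ext
      show (i.val + 1) % n = j.val
      rw [hij]; exact Nat.mod_eq_of_lt (by rw [← hij]; exact j.isLt)
    unfold PP; rw [hi, hj]; exact he
  · rintro ⟨t, ht, he⟩
    refine ⟨pt n hn0 t, pt n hn0 (t+1), he, ?_⟩
    show (t + 1) % n = t % n + 1
    rw [Nat.mod_eq_of_lt ht, Nat.mod_eq_of_lt (by omega)]

lemma edge_inj (hn0 : 0 < n) (p : Equiv.Perm (Fin n)) {t t' : ℕ} (ht : t + 1 < n) (ht' : t' + 1 < n)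
    (h : s(PP hn0 p t, PP hn0 p (t+1)) = s(PP hn0 p t', PP hn0 p (t'+1))) : t = t' := by
  rw [Sym2.eq_iff] at h
  rcases h with ⟨h1, h2⟩ | ⟨h1, h2⟩
  · exact PP_inj hn0 p (by omega) (by omega) h1
  · have e1 := PP_inj hn0 p (by omega) (by omega) h1
    have e2 := PP_inj hn0 p (by omega) (by omega) h2
    omega

lemma card_pathEdges (hn0 : 0 < n) (p : Equiv.Perm (Fin n)) : (pathEdges p).card = n - 1 := by
  have himg : pathEdges p
      = (Finset.range (n-1)).image (fun t => s(PP hn0 p t, PP hn0 p (t+1))) := by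
    ext e
    rw [mem_pathEdges hn0 p e]
    simp only [Finset.mem_image, Finset.mem_range]
    constructor
    · rintro ⟨t, ht, he⟩; exact ⟨t, by omega, he.symm⟩
    · rintro ⟨t, ht, he⟩; exact ⟨t, by omega, he.symm⟩
  rw [himg, Finset.card_image_of_injOn, Finset.card_range]
  intro t ht t' ht' h
  simp only [Finset.mem_coe, Finset.mem_range] at ht ht'
  exact edge_inj hn0 p (by omega) (by omega) h

lemma ivt (Q : ℕ → Prop) [DecidablePred Q] {a b : ℕ} (hab : a ≤ b) (ha : Q a) (hb : ¬ Q b) :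
    ∃ t, a ≤ t ∧ t + 1 ≤ b ∧ Q t ∧ ¬ Q (t+1) := by
  induction b with
  | zero =>
    exact absurd (Nat.le_zero.mp hab ▸ ha) hb
  | succ b ih =>
    by_cases hb' : a = b + 1
    · exact absurd ha (hb' ▸ hb)
    · have hab' : a ≤ b := by omega
      by_cases hQb : Q b
      · exact ⟨b, hab', le_refl _, hQb, hb⟩
      · obtain ⟨t, h1, h2, h3, h4⟩ := ih hab' hQb
        exact ⟨t, h1, by omega, h3, h4⟩

lemma lsep (hn0 : 0 < n) (hn : 3 ≤ n) (p : Equiv.Perm (Fin n))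
    (hnc : ∀ e ∈ pathEdges p, ∀ f ∈ pathEdges p, ¬ Crosses e f)
    (j : ℕ) (hj : j + 1 < n) (m m' : ℕ) (hm : m < j) (hm' : m' < j)
    (hQ : posn (PP hn0 p (j+1)) (PP hn0 p m) < posn (PP hn0 p (j+1)) (PP hn0 p j))
    (hQ' : ¬ posn (PP hn0 p (j+1)) (PP hn0 p m') < posn (PP hn0 p (j+1)) (PP hn0 p j)) :
    False := by
  classical
  set a := PP hn0 p (j+1) with ha
  set K := posn a (PP hn0 p j) with hK
  set Q : ℕ → Prop := fun t => posn a (PP hn0 p t) < K with hQdef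
  have hQm : Q m := hQ
  have hQm' : ¬ Q m' := hQ'
  have hnePP : ∀ {x y : ℕ}, x < n → y < n → x ≠ y → PP hn0 p x ≠ PP hn0 p y :=
    fun hx hy hxy h => hxy (PP_inj hn0 p hx hy h)
  have key : ∀ t, t + 1 < j → ¬ (Q t ↔ Q (t+1)) → False := by
    intro t htj hQt
    have hme : s(PP hn0 p j, PP hn0 p (j+1)) ∈ pathEdges p :=
      (mem_pathEdges hn0 p _).mpr ⟨j, hj, rfl⟩
    have hmf : s(PP hn0 p t, PP hn0 p (t+1)) ∈ pathEdges p :=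
      (mem_pathEdges hn0 p _).mpr ⟨t, by omega, rfl⟩
    apply hnc _ hme _ hmf
    refine ⟨a, PP hn0 p j, PP hn0 p t, PP hn0 p (t+1), Sym2.eq_swap, rfl,
      hnePP (by omega) (by omega) (by omega),
      hnePP (by omega) (by omega) (by omega),
      hnePP (by omega) (by omega) (by omega),
      hnePP (by omega) (by omega) (by omega),
      hnePP (by omega) (by omega) (by omega),
      hnePP (by omega) (by omega) (by omega), ?_⟩
    show Q t ↔ ¬ Q (t+1)
    tauto
  have hne : m ≠ m' := fun h => hQm' (h ▸ hQm)
  rcases lt_or_gt_of_ne hne with hlt | hlt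
  · obtain ⟨t, h1, h2, h3, h4⟩ := ivt Q (le_of_lt hlt) hQm hQm'
    exact key t (by omega) (by tauto)
  · obtain ⟨t, h1, h2, h3, h4⟩ := ivt (fun t => ¬ Q t) (le_of_lt hlt) hQm' (not_not_intro hQm)
    exact key t (by omega) (by tauto)

end Part2
section Part3
variable {n : ℕ}

/-- Main geometric lemma: if the edge at index `j` is the last diagonal of a
non-crossing spanning path, then connecting `p j` to the last vertex is a hull edge. -/
lemma last_diag_hull (hn0 : 0 < n) (hn : 3 ≤ n) (p : Equiv.Perm (Fin n))
    (hnc : ∀ e ∈ pathEdges p, ∀ f ∈ pathEdges p, ¬ Crosses e f)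
    (j : ℕ) (hj : j + 1 < n)
    (hdiag : ¬ IsHullEdge s(PP hn0 p j, PP hn0 p (j+1)))
    (hhull : ∀ t, j < t → t + 1 < n → IsHullEdge s(PP hn0 p t, PP hn0 p (t+1))) :
    IsHullEdge s(PP hn0 p j, PP hn0 p (n-1)) := by
  set a := PP hn0 p (j+1) with ha
  set K := posn a (PP hn0 p j) with hK
  have hKn : K < n := posn_lt hn0 _ _
  have hK0 : K ≠ 0 := by
    intro h
    have h2 : PP hn0 p j = a := posn_inj (h.trans (posn_self a).symm)
    have := PP_inj hn0 p (by omega) (by omega) h2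
    omega
  have hK1 : K ≠ 1 := by
    intro h
    apply hdiag
    rw [hull_iff]; right
    rw [posn_succ a a (PP hn0 p j), posn_self, ← hK, h]
    show (0 + 1) % n = 1
    rw [Nat.mod_eq_of_lt (by omega)]
  have hKtop : K ≠ n - 1 := by
    intro h
    apply hdiag
    rw [hull_iff]; left
    rw [posn_succ a (PP hn0 p j) a, posn_self, ← hK, h]
    have h2 : n - 1 + 1 = n := by omega
    rw [h2, Nat.mod_self]
  by_cases hlast : j + 2 = n
  · -- the diagonal is the last edge: contradiction
    exfalso
    obtain ⟨x, hx⟩ := posn_surj hn0 a 1 (by omega)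
    obtain ⟨m, hmn, hmx⟩ := PP_surj hn0 p x
    obtain ⟨x', hx'⟩ := posn_surj hn0 a (n-1) (by omega)
    obtain ⟨m', hmn', hmx'⟩ := PP_surj hn0 p x'
    have hmj : m < j := by
      rcases Nat.lt_or_ge m j with h | h
      · exact h
      exfalso
      rcases Nat.eq_or_lt_of_le h with h2 | h2
      · rw [h2, hmx, hx] at hK; omega
      · have hmj1 : m = j + 1 := by omega
        rw [hmj1] at hmx
        rw [← ha] at hmx
        rw [hmx, posn_self] at hx
        omega
    have hmj' : m' < j := by
      rcases Nat.lt_or_ge m' j with h | h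
      · exact h
      exfalso
      rcases Nat.eq_or_lt_of_le h with h2 | h2
      · rw [h2, hmx', hx'] at hK; omega
      · have hmj1 : m' = j + 1 := by omega
        rw [hmj1] at hmx'
        rw [← ha] at hmx'
        rw [hmx', posn_self] at hx'
        omega
    exact lsep hn0 hn p hnc j hj m m' hmj hmj'
      (by rw [hmx, hx, ← hK]; omega) (by rw [hmx', hx', ← hK]; omega)
  · have hj2 : j + 2 < n := by omega
    have hstep := hhull (j+1) (by omega) (by omega)
    rw [hull_iff] at hstep
    rcases hstep with hdir | hdir
    · -- direction +1
      have C1 : ∀ t, j + 1 ≤ t → t < n → posn a (PP hn0 p t) = t - (j+1) := by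
        intro t
        induction t using Nat.strong_induction_on with
        | _ t IH =>
          intro ht1 ht2
          rcases Nat.eq_or_lt_of_le ht1 with h | h
          · rw [← h, ← ha, posn_self]; omega
          · rcases Nat.eq_or_lt_of_le h with h2 | h2
            · have h3 : (posn a a + 1) % n = posn a (PP hn0 p (j+2)) :=
                (posn_succ a a (PP hn0 p (j+2))).mp hdir
              rw [posn_self] at h3
              have h4 : posn a (PP hn0 p (j+2)) = 1 := by
                rw [← h3, Nat.mod_eq_of_lt (by omega)]
              rw [← h2, h4]; omega
            · have e1 := IH (t-1) (by omega) (by omega) (by omega)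
              have e2 := IH (t-2) (by omega) (by omega) (by omega)
              have hh := hhull (t-1) (by omega) (by omega)
              have hrw : t - 1 + 1 = t := by omega
              rw [hrw, hull_iff] at hh
              rcases hh with h3 | h3
              · have h4 := (posn_succ a (PP hn0 p (t-1)) (PP hn0 p t)).mp h3
                rw [e1, Nat.mod_eq_of_lt (by omega)] at h4
                omega
              · exfalso
                have h4 := (posn_succ a (PP hn0 p t) (PP hn0 p (t-1))).mp h3
                rw [e1] at h4
                rw [succ_spec _ (posn_lt hn0 a (PP hn0 p t))] at h4
                split_ifs at h4 with h5
                · omega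
                · have h6 : PP hn0 p t = PP hn0 p (t-2) := posn_inj (by rw [e2]; omega)
                  have := PP_inj hn0 p (by omega) (by omega) h6
                  omega
      have hps : posn a (PP hn0 p (n-1)) = n - 2 - j := by
        rw [C1 (n-1) (by omega) (by omega)]; omega
      have hKgt : n - 2 - j + 1 ≤ K := by
        by_contra hcon
        have harc := C1 (j+1+K) (by omega) (by omega)
        have h6 : PP hn0 p j = PP hn0 p (j+1+K) := posn_inj (by rw [harc, ← hK]; omega)
        have := PP_inj hn0 p (by omega) (by omega) h6
        omega
      rcases Nat.eq_or_lt_of_le hKgt with hKe | hKgt2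
      · rw [hull_iff]; right
        rw [posn_succ a (PP hn0 p (n-1)) (PP hn0 p j), hps, ← hK]
        rw [Nat.mod_eq_of_lt (by omega)]
        omega
      · exfalso
        obtain ⟨x, hx⟩ := posn_surj hn0 a (n - 2 - j + 1) (by omega)
        obtain ⟨m, hmn, hmx⟩ := PP_surj hn0 p x
        obtain ⟨x', hx'⟩ := posn_surj hn0 a (n-1) (by omega)
        obtain ⟨m', hmn', hmx'⟩ := PP_surj hn0 p x'
        have hmj : m < j := by
          rcases Nat.lt_or_ge m j with h | h
          · exact h
          exfalso
          rcases Nat.eq_or_lt_of_le h with h2 | h2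
          · rw [h2, hmx, hx] at hK; omega
          · have harc := C1 m (by omega) hmn
            rw [hmx, hx] at harc
            omega
        have hmj' : m' < j := by
          rcases Nat.lt_or_ge m' j with h | h
          · exact h
          exfalso
          rcases Nat.eq_or_lt_of_le h with h2 | h2
          · rw [h2, hmx', hx'] at hK; omega
          · have harc := C1 m' (by omega) hmn'
            rw [hmx', hx'] at harc
            omega
        exact lsep hn0 hn p hnc j hj m m' hmj hmj'
          (by rw [hmx, hx, ← hK]; omega) (by rw [hmx', hx', ← hK]; omega)
    · -- direction -1
      have C2 : ∀ t, j + 2 ≤ t → t < n → posn a (PP hn0 p t) = n - (t - (j+1)) := by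
        intro t
        induction t using Nat.strong_induction_on with
        | _ t IH =>
          intro ht1 ht2
          rcases Nat.eq_or_lt_of_le ht1 with h | h
          · have h3 := (posn_succ a (PP hn0 p (j+2)) a).mp hdir
            rw [posn_self] at h3
            have hlt := posn_lt hn0 a (PP hn0 p (j+2))
            have h4 : posn a (PP hn0 p (j+2)) = n - 1 := by
              rw [succ_spec _ hlt] at h3
              split_ifs at h3 with h5
              all_goals omega
            rw [← h, h4]; omega
          · have e1 := IH (t-1) (by omega) (by omega) (by omega)
            have hh := hhull (t-1) (by omega) (by omega)
            have hrw : t - 1 + 1 = t := by omega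
            rw [hrw, hull_iff] at hh
            rcases hh with h3 | h3
            · exfalso
              have h4 := (posn_succ a (PP hn0 p (t-1)) (PP hn0 p t)).mp h3
              rw [e1] at h4
              rw [succ_spec _ (by omega : n - (t - 1 - (j+1)) < n)] at h4
              split_ifs at h4 with h5
              · -- t = j + 3 and posn (PP t) = 0, so PP t = a
                have h6 : PP hn0 p t = a := posn_inj (by rw [← h4, posn_self])
                have := PP_inj hn0 p (by omega) (by omega) h6
                omega
              · -- posn (PP t) = n - (t-1-(j+1)) + 1 = posn (PP (t-2)), t ≥ j+4
                have ht4 : j + 4 ≤ t := by omega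
                have e2 := IH (t-2) (by omega) (by omega) (by omega)
                have h6 : PP hn0 p t = PP hn0 p (t-2) := posn_inj (by rw [e2]; omega)
                have := PP_inj hn0 p (by omega) (by omega) h6
                omega
            · have h4 := (posn_succ a (PP hn0 p t) (PP hn0 p (t-1))).mp h3
              rw [e1] at h4
              rw [succ_spec _ (posn_lt hn0 a (PP hn0 p t))] at h4
              split_ifs at h4 with h5
              · omega
              · omega
      have hps : posn a (PP hn0 p (n-1)) = j + 2 := by
        rw [C2 (n-1) (by omega) (by omega)]; omega
      have hKle : K ≤ j + 1 := by
        by_contra hcon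
        push_neg at hcon
        have harc := C2 (j+1+(n-K)) (by omega) (by omega)
        have h6 : PP hn0 p j = PP hn0 p (j+1+(n-K)) := posn_inj (by rw [harc, ← hK]; omega)
        have := PP_inj hn0 p (by omega) (by omega) h6
        omega
      rcases Nat.eq_or_lt_of_le hKle with hKe | hKlt
      · rw [hull_iff]; left
        rw [posn_succ a (PP hn0 p j) (PP hn0 p (n-1)), hps, ← hK]
        rw [Nat.mod_eq_of_lt (by omega)]
        omega
      · exfalso
        obtain ⟨x, hx⟩ := posn_surj hn0 a 1 (by omega)
        obtain ⟨m, hmn, hmx⟩ := PP_surj hn0 p x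
        obtain ⟨x', hx'⟩ := posn_surj hn0 a (K+1) (by omega)
        obtain ⟨m', hmn', hmx'⟩ := PP_surj hn0 p x'
        have hmj : m < j := by
          rcases Nat.lt_or_ge m j with h | h
          · exact h
          exfalso
          rcases Nat.eq_or_lt_of_le h with h2 | h2
          · rw [h2, hmx, hx] at hK; omega
          · rcases Nat.eq_or_lt_of_le h2 with h3 | h3
            · rw [← h3, ← ha] at hmx
              rw [hmx, posn_self] at hx; omega
            · have harc := C2 m (by omega) hmn
              rw [hmx, hx] at harc
              omega
        have hmj' : m' < j := by
          rcases Nat.lt_or_ge m' j with h | h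
          · exact h
          exfalso
          rcases Nat.eq_or_lt_of_le h with h2 | h2
          · rw [h2, hmx', hx'] at hK; omega
          · rcases Nat.eq_or_lt_of_le h2 with h3 | h3
            · rw [← h3, ← ha] at hmx'
              rw [hmx', posn_self] at hx'; omega
            · have harc := C2 m' (by omega) hmn'
              rw [hmx', hx'] at harc
              omega
        exact lsep hn0 hn p hnc j hj m m' hmj hmj'
          (by rw [hmx, hx, ← hK]; omega) (by rw [hmx', hx', ← hK]; omega)

end Part3
section Part4
variable {n : ℕ}

/-- reverse the tail after index `j` -/
def sigmaFun (hn0 : 0 < n) (j : ℕ) : Fin n → Fin n := fun i =>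
  ⟨(if i.val ≤ j then i.val else n + j - i.val) % n, Nat.mod_lt _ hn0⟩

lemma sigmaFun_invol (hn0 : 0 < n) (j : ℕ) : Function.Involutive (sigmaFun hn0 j) := by
  intro i
  have hi := i.isLt
  apply Fin.ext
  show (if ((if i.val ≤ j then i.val else n + j - i.val) % n) ≤ j
      then ((if i.val ≤ j then i.val else n + j - i.val) % n)
      else n + j - ((if i.val ≤ j then i.val else n + j - i.val) % n)) % n = i.val
  by_cases h : i.val ≤ j
  · rw [if_pos h, Nat.mod_eq_of_lt hi, if_pos h, Nat.mod_eq_of_lt hi]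
  · have h3 : (n + j - i.val) % n = n + j - i.val := Nat.mod_eq_of_lt (by omega)
    rw [if_neg h, h3, if_neg (by omega), Nat.mod_eq_of_lt (by omega)]
    omega

def flipPerm (hn0 : 0 < n) (p : Equiv.Perm (Fin n)) (j : ℕ) : Equiv.Perm (Fin n) :=
  ((sigmaFun_invol hn0 j).toPerm _).trans p

lemma PP_flip (hn0 : 0 < n) (p : Equiv.Perm (Fin n)) (j t : ℕ) (ht : t < n) :
    PP hn0 (flipPerm hn0 p j) t
      = if t ≤ j then PP hn0 p t else PP hn0 p (n + j - t) := by
  show p (sigmaFun hn0 j (pt n hn0 t)) = _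
  have harg : pt n hn0 t = ⟨t, ht⟩ := Fin.ext (Nat.mod_eq_of_lt ht)
  rw [harg]
  by_cases h : t ≤ j
  · rw [if_pos h]
    unfold PP
    apply congrArg
    apply Fin.ext
    show (if t ≤ j then t else n + j - t) % n = t % n
    rw [if_pos h]
  · rw [if_neg h]
    unfold PP
    apply congrArg
    apply Fin.ext
    show (if t ≤ j then t else n + j - t) % n = (n + j - t) % n
    rw [if_neg h]

lemma pathEdges_flip (hn0 : 0 < n) (p : Equiv.Perm (Fin n)) (j : ℕ) (hj : j + 1 < n) :
    pathEdges (flipPerm hn0 p j)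
      = ((pathEdges p).erase s(PP hn0 p j, PP hn0 p (j+1)))
          ∪ {s(PP hn0 p j, PP hn0 p (n-1))} := by
  ext e
  rw [mem_pathEdges hn0 _ e, Finset.mem_union, Finset.mem_erase, Finset.mem_singleton,
    mem_pathEdges hn0 p e]
  constructor
  · rintro ⟨t, ht, he⟩
    rw [PP_flip hn0 p j t (by omega), PP_flip hn0 p j (t+1) (by omega)] at he
    by_cases h1 : t + 1 ≤ j
    · rw [if_pos (by omega), if_pos h1] at he
      refine Or.inl ⟨?_, ⟨t, ht, he⟩⟩
      rw [he]
      intro hcon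
      have := edge_inj hn0 p (by omega) hj hcon
      omega
    · by_cases h2 : t ≤ j
      · have htj : t = j := by omega
        rw [if_pos h2, if_neg h1] at he
        right
        rw [he, htj]
        have h3 : n + j - (j+1) = n - 1 := by omega
        rw [h3]
      · rw [if_neg h2, if_neg h1] at he
        left
        have h3 : n + j - t = (n + j - (t+1)) + 1 := by omega
        rw [h3] at he
        have he2 : e = s(PP hn0 p (n + j - (t+1)), PP hn0 p ((n + j - (t+1)) + 1)) := by
          rw [he, Sym2.eq_swap]
        refine ⟨?_, n + j - (t+1), by omega, he2⟩
        rw [he2]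
        intro hcon
        have := edge_inj hn0 p (by omega) hj hcon
        omega
  · rintro (⟨hne, t, ht, he⟩ | he)
    · by_cases h1 : t + 1 ≤ j
      · refine ⟨t, ht, ?_⟩
        rw [PP_flip hn0 p j t (by omega), PP_flip hn0 p j (t+1) (by omega),
          if_pos (by omega), if_pos h1]
        exact he
      · by_cases h2 : t ≤ j
        · exfalso
          apply hne
          have htj : t = j := by omega
          rw [he, htj]
        · refine ⟨n + j - (t+1), by omega, ?_⟩
          rw [PP_flip hn0 p j _ (by omega), PP_flip hn0 p j _ (by omega),
            if_neg (by omega), if_neg (by omega)]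
          have h3 : n + j - (n + j - (t+1)) = t + 1 := by omega
          have h4 : n + j - (n + j - (t+1) + 1) = t := by omega
          rw [h3, h4, he, Sym2.eq_swap]
    · refine ⟨j, hj, ?_⟩
      rw [PP_flip hn0 p j j (by omega), PP_flip hn0 p j (j+1) (by omega),
        if_pos (le_refl j), if_neg (by omega)]
      have h3 : n + j - (j+1) = n - 1 := by omega
      rw [h3, he]

lemma flip_step (hn : 3 ≤ n) (v : PVert n) (hd : diagCount v ≠ 0) :
    ∃ v' : PVert n, (pathGraph n).Adj v v' ∧ diagCount v' + 1 = diagCount v := by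
  have hn0 : 0 < n := by omega
  obtain ⟨⟨p, hp⟩, hnc⟩ := v.2
  rw [hp] at hnc
  have hne : ∃ t, t + 1 < n ∧ ¬ IsHullEdge s(PP hn0 p t, PP hn0 p (t+1)) := by
    unfold diagCount at hd
    obtain ⟨e, he⟩ := Finset.card_pos.mp (Nat.pos_of_ne_zero hd)
    rw [Finset.mem_filter] at he
    obtain ⟨he1, he2⟩ := he
    rw [hp, mem_pathEdges hn0] at he1
    obtain ⟨t, ht, rfl⟩ := he1
    exact ⟨t, ht, he2⟩
  set S := (Finset.range (n-1)).filter
    (fun t => ¬ IsHullEdge s(PP hn0 p t, PP hn0 p (t+1))) with hS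
  have hSne : S.Nonempty := by
    obtain ⟨t, ht, hdg⟩ := hne
    exact ⟨t, by rw [hS, Finset.mem_filter, Finset.mem_range]; exact ⟨by omega, hdg⟩⟩
  set j := S.max' hSne with hj0
  have hjS : j ∈ S := S.max'_mem hSne
  rw [hS, Finset.mem_filter, Finset.mem_range] at hjS
  have hj : j + 1 < n := by have := hjS.1; omega
  have hdiag := hjS.2
  have hhull : ∀ t, j < t → t + 1 < n → IsHullEdge s(PP hn0 p t, PP hn0 p (t+1)) := by
    intro t htj htn
    by_contra hcon
    have htS : t ∈ S := by
      rw [hS, Finset.mem_filter, Finset.mem_range]; exact ⟨by omega, hcon⟩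
    have := S.le_max' t htS
    omega
  have hnew := last_diag_hull hn0 hn p hnc j hj hdiag hhull
  set d := s(PP hn0 p j, PP hn0 p (j+1)) with hd2
  set h := s(PP hn0 p j, PP hn0 p (n-1)) with hh2
  have hdE : d ∈ pathEdges p := (mem_pathEdges hn0 p d).mpr ⟨j, hj, rfl⟩
  have hhE : h ∉ pathEdges p := by
    intro hcon
    rw [mem_pathEdges hn0 p h] at hcon
    obtain ⟨t, ht, he⟩ := hcon
    rw [hh2, Sym2.eq_iff] at he
    rcases he with ⟨h1, h2⟩ | ⟨h1, h2⟩
    · have e1 := PP_inj hn0 p (by omega) (by omega) h1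
      have e2 := PP_inj hn0 p (by omega) (by omega) h2
      apply hdiag
      have h3 : j + 1 = n - 1 := by omega
      rw [hd2, h3]
      exact hnew
    · have e2 := PP_inj hn0 p (by omega) (by omega) h2
      omega
  have hdh : d ≠ h := by intro hcon; exact hdiag (hcon ▸ hnew)
  set E' := (pathEdges p).erase d ∪ {h} with hE'
  have hE'path : E' = pathEdges (flipPerm hn0 p j) := by
    rw [pathEdges_flip hn0 p j hj, ← hd2, ← hh2]
  have hnc' : ∀ e ∈ E', ∀ f ∈ E', ¬ Crosses e f := by
    intro e heE f hfE
    rw [hE', Finset.mem_union, Finset.mem_erase, Finset.mem_singleton] at heE hfE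
    rcases hfE with ⟨hfd, hfE⟩ | rfl
    · rcases heE with ⟨hed, heE⟩ | rfl
      · exact hnc e heE f hfE
      · exact not_crosses_of_hull_left (by omega) hnew
    · exact not_crosses_of_hull_right (by omega) hnew
  refine ⟨⟨E', ⟨flipPerm hn0 p j, hE'path⟩, hnc'⟩, ⟨?_, ?_⟩, ?_⟩
  · intro hcon
    have hveq : v.1 = E' := congrArg Subtype.val hcon
    apply hhE
    rw [← hp, hveq, hE']
    exact Finset.mem_union_right _ (Finset.mem_singleton_self h)
  · show (v.1 \ E' ∪ E' \ v.1).card = 2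
    rw [hp]
    have h1 : pathEdges p \ E' = {d} := by
      ext e
      rw [hE']
      simp only [Finset.mem_sdiff, Finset.mem_union, Finset.mem_erase, Finset.mem_singleton]
      constructor
      · rintro ⟨heE, hnot⟩
        push_neg at hnot
        by_contra hed
        exact (hnot.1 hed heE).elim
      · rintro rfl
        refine ⟨hdE, ?_⟩
        push_neg
        exact ⟨fun hed _ => (hed rfl).elim, hdh⟩
    have h2 : E' \ pathEdges p = {h} := by
      ext e
      rw [hE']
      simp only [Finset.mem_sdiff, Finset.mem_union, Finset.mem_erase, Finset.mem_singleton]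
      constructor
      · rintro ⟨hor, hnotE⟩
        rcases hor with ⟨_, heE⟩ | rfl
        · exact (hnotE heE).elim
        · rfl
      · rintro rfl
        exact ⟨Or.inr rfl, hhE⟩
    rw [h1, h2]
    rw [Finset.card_union_of_disjoint (Finset.disjoint_singleton.mpr hdh)]
    simp
  · show (E'.filter (fun e => ¬ IsHullEdge e)).card + 1 = diagCount v
    have hdm : d ∈ (pathEdges p).filter (fun e => ¬ IsHullEdge e) :=
      Finset.mem_filter.mpr ⟨hdE, hdiag⟩
    have hcp : 0 < ((pathEdges p).filter (fun e => ¬ IsHullEdge e)).card :=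
      Finset.card_pos.mpr ⟨d, hdm⟩
    rw [hE', Finset.filter_union, Finset.filter_singleton, if_neg (not_not_intro hnew),
      Finset.union_empty, Finset.filter_erase, Finset.card_erase_of_mem hdm]
    unfold diagCount
    rw [hp]
    omega

end Part4
section Part5
variable {n : ℕ}

lemma card_PVert (hn0 : 0 < n) (v : PVert n) : v.1.card = n - 1 := by
  obtain ⟨⟨p, hp⟩, -⟩ := v.2
  rw [hp, card_pathEdges hn0 p]

lemma sdiff_card_one (hn0 : 0 < n) {u w : PVert n} (h : (pathGraph n).Adj u w) :
    (u.1 \ w.1).card = 1 := by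
  obtain ⟨hne, hcard⟩ := h
  rw [Finset.card_union_of_disjoint (disjoint_sdiff_sdiff)] at hcard
  have h1 := Finset.card_inter_add_card_sdiff u.1 w.1
  have h2 := Finset.card_inter_add_card_sdiff w.1 u.1
  rw [Finset.inter_comm] at h2
  have hcu := card_PVert hn0 u
  have hcw := card_PVert hn0 w
  omega

lemma diag_adj (hn0 : 0 < n) {u w : PVert n} (h : (pathGraph n).Adj u w) :
    diagCount u ≤ diagCount w + 1 := by
  have hsub : u.1 ⊆ w.1 ∪ (u.1 \ w.1) := by
    intro e he
    rw [Finset.mem_union, Finset.mem_sdiff]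
    by_cases hew : e ∈ w.1
    · exact Or.inl hew
    · exact Or.inr ⟨he, hew⟩
  calc diagCount u ≤ ((w.1 ∪ (u.1 \ w.1)).filter (fun e => ¬ IsHullEdge e)).card :=
        Finset.card_le_card (Finset.filter_subset_filter _ hsub)
    _ ≤ (w.1.filter (fun e => ¬ IsHullEdge e)).card
        + ((u.1 \ w.1).filter (fun e => ¬ IsHullEdge e)).card := by
        rw [Finset.filter_union]; exact Finset.card_union_le _ _
    _ ≤ diagCount w + 1 := by
        have h1 := Finset.card_filter_le (u.1 \ w.1) (fun e => ¬ IsHullEdge e)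
        have h2 := sdiff_card_one hn0 h
        unfold diagCount
        omega

lemma diag_le_walk (hn0 : 0 < n) {u w : PVert n} (wk : (pathGraph n).Walk u w) :
    diagCount u ≤ wk.length + diagCount w := by
  induction wk with
  | nil => simp
  | cons h q ih =>
    have := diag_adj hn0 h
    rw [SimpleGraph.Walk.length_cons]
    omega

lemma diagCount_eq_zero_iff (v : PVert n) : diagCount v = 0 ↔ IsBoundary v := by
  unfold diagCount IsBoundary
  rw [Finset.card_eq_zero, Finset.filter_eq_empty_iff]
  simp only [not_not]

lemma exists_boundary (hn : 3 ≤ n) (v : PVert n) :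
    ∃ b, IsBoundary b ∧ ∃ wk : (pathGraph n).Walk v b, wk.length ≤ diagCount v := by
  generalize hgen : diagCount v = k
  induction k generalizing v with
  | zero => exact ⟨v, (diagCount_eq_zero_iff v).mp hgen, SimpleGraph.Walk.nil, by simp⟩
  | succ k ih =>
    obtain ⟨v', hadj, hdc⟩ := flip_step hn v (by omega)
    obtain ⟨b, hb, wk, hwk⟩ := ih v' (by omega)
    refine ⟨b, hb, SimpleGraph.Walk.cons hadj wk, ?_⟩
    rw [SimpleGraph.Walk.length_cons]
    omega

lemma hull_card (hn : 3 ≤ n) : (Finset.univ.filter (IsHullEdge (n := n))).card = n := by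
  have hn0 : 0 < n := by omega
  have himg : Finset.univ.filter (IsHullEdge (n := n))
      = Finset.univ.image (fun i : Fin n => s(i, ⟨(i.val + 1) % n, Nat.mod_lt _ hn0⟩)) := by
    ext e
    rw [Finset.mem_filter, Finset.mem_image]
    simp only [Finset.mem_univ, true_and]
    constructor
    · rintro ⟨a, b, rfl, hab | hab⟩
      · exact ⟨a, by rw [show (⟨(a.val + 1) % n, Nat.mod_lt _ hn0⟩ : Fin n) = b from Fin.ext hab]⟩
      · refine ⟨b, ?_⟩
        rw [show (⟨(b.val + 1) % n, Nat.mod_lt _ hn0⟩ : Fin n) = a from Fin.ext hab]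
        exact Sym2.eq_swap
    · rintro ⟨i, rfl⟩
      exact ⟨i, ⟨(i.val + 1) % n, Nat.mod_lt _ hn0⟩, rfl, Or.inl rfl⟩
  rw [himg, Finset.card_image_of_injOn, Finset.card_univ, Fintype.card_fin]
  intro x _ y _ hxy
  rw [Sym2.eq_iff] at hxy
  rcases hxy with ⟨h1, -⟩ | ⟨h1, h2⟩
  · exact h1
  · exfalso
    have hx := x.isLt; have hy := y.isLt
    have e1 : x.val = (y.val + 1) % n := congrArg Fin.val h1
    have e2 : (x.val + 1) % n = y.val := congrArg Fin.val h2
    rw [succ_spec _ hy] at e1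
    rw [succ_spec _ hx] at e2
    split_ifs at e1 e2 <;> omega

lemma boundary_adj (hn : 3 ≤ n) {u w : PVert n} (hu : IsBoundary u) (hw : IsBoundary w)
    (hne : u ≠ w) : (pathGraph n).Adj u w := by
  have hn0 : 0 < n := by omega
  have hne1 : u.1 ≠ w.1 := fun hh => hne (Subtype.ext hh)
  have hsu : u.1 ⊆ Finset.univ.filter (IsHullEdge (n := n)) :=
    fun e he => Finset.mem_filter.mpr ⟨Finset.mem_univ e, hu e he⟩
  have hsw : w.1 ⊆ Finset.univ.filter (IsHullEdge (n := n)) :=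
    fun e he => Finset.mem_filter.mpr ⟨Finset.mem_univ e, hw e he⟩
  have hcu := card_PVert hn0 u
  have hcw := card_PVert hn0 w
  have hUn : (u.1 ∪ w.1).card ≤ n := by
    calc (u.1 ∪ w.1).card ≤ (Finset.univ.filter (IsHullEdge (n := n))).card :=
          Finset.card_le_card (Finset.union_subset hsu hsw)
      _ = n := hull_card hn
  have hI := Finset.card_union_add_card_inter u.1 w.1
  have h1 := Finset.card_inter_add_card_sdiff u.1 w.1
  have h2 := Finset.card_inter_add_card_sdiff w.1 u.1
  rw [Finset.inter_comm] at h2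
  have hd1 : (u.1 \ w.1).card ≠ 0 := by
    intro h0
    have hsub : u.1 ⊆ w.1 := by
      rw [← Finset.sdiff_eq_empty_iff_subset]
      exact Finset.card_eq_zero.mp h0
    exact hne1 (Finset.eq_of_subset_of_card_le hsub (by omega))
  have hd2 : (w.1 \ u.1).card ≠ 0 := by
    intro h0
    have hsub : w.1 ⊆ u.1 := by
      rw [← Finset.sdiff_eq_empty_iff_subset]
      exact Finset.card_eq_zero.mp h0
    exact hne1 (Finset.eq_of_subset_of_card_le hsub (by omega)).symm
  refine ⟨hne, ?_⟩
  rw [Finset.card_union_of_disjoint (disjoint_sdiff_sdiff)]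
  omega

end Part5

/-- The distance in `G(P)` from any vertex `v` to the set of boundary paths equals
the number of diagonals of `v`. -/
theorem dist_to_boundary_eq_diagCount (n : ℕ) (hn : 3 ≤ n) (v : PVert n) :
    sInf {d : ℕ | ∃ b : PVert n, IsBoundary b ∧ d = (pathGraph n).dist v b} =
      diagCount v := by
  have hn0 : 0 < n := by omega
  obtain ⟨b0, hb0, wk0, hwk0⟩ := exists_boundary hn v
  have lower : ∀ b : PVert n, IsBoundary b → diagCount v ≤ (pathGraph n).dist v b := by
    intro b hb
    have hreach : (pathGraph n).Reachable v b := by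
      by_cases hvb : b0 = b
      · exact hvb ▸ wk0.reachable
      · exact wk0.reachable.trans (SimpleGraph.Adj.reachable (boundary_adj hn hb0 hb hvb))
    obtain ⟨wk, hwk⟩ := hreach.exists_walk_length_eq_dist
    have hle := diag_le_walk hn0 wk
    have hzb : diagCount b = 0 := (diagCount_eq_zero_iff b).mpr hb
    omega
  have upper : (pathGraph n).dist v b0 ≤ diagCount v :=
    le_trans (SimpleGraph.dist_le wk0) hwk0
  have hmem : diagCount v ∈ {d : ℕ | ∃ b : PVert n, IsBoundary b ∧ d = (pathGraph n).dist v b} :=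
    ⟨b0, hb0, le_antisymm (lower b0 hb0) upper⟩
  apply le_antisymm
  · exact Nat.sInf_le hmem
  · apply le_csInf ⟨_, hmem⟩
    rintro d ⟨b, hb, rfl⟩
    exact lower b hb

end PG
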